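/- Progress for the circuit-generating abstract machine: if p₁:bit,...,p_{#L}:bit ⊢ M : bit^m and (M, RC, L) is an abstract machine state, then either M is a value, or M contains the subterm Err, or (M, RC, L) reduces via →_am. -/

import Mathlib

set_option autoImplicit true
set_option maxHeartbeats 1000000


/-- A multi-controlled-not gate: an active wire and a list of controls
(wire, polarity). -/
structure Gate where
  active : ℕ
  controls : List (ℕ × Bool)

/-- Well-formedness: no control wire coincides with the active wire. -/
def Gate.wf (g : Gate) : Prop := ∀ c ∈ g.controls, c.1 ≠ g.active

/-- The set of wires of a gate. -/
def Gate.wires (g : Gate) : Set ℕ := insert g.active {w | ∃ b, (w, b) ∈ g.controls}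

/-- Value of a control `(j, b)` on a valuation `v` : `v j XOR b XOR true`. -/
def ctrlVal (v : ℕ → Bool) (c : ℕ × Bool) : Bool := Bool.xor (v c.1) (Bool.xor c.2 true)

/-- Execution of a gate on a valuation. -/
def execGate (g : Gate) (v : ℕ → Bool) : ℕ → Bool := fun l =>
  if l = g.active then
    if g.controls.isEmpty then !(v l)
    else Bool.xor (v l) (g.controls.all (ctrlVal v))
  else v l

/-- Execution of a list of gates, in order. -/
def execCircuit (C : List Gate) (v : ℕ → Bool) : ℕ → Bool :=
  C.foldl (fun v g => execGate g v) v

/-- Wires of a circuit. -/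
def circuitWires (C : List Gate) : Set ℕ := {w | ∃ g ∈ C, w ∈ g.wires}

/-! ## The language PCF^list -/

/-- Types of PCF^list. -/
inductive Ty : Type
  | bit : Ty
  | unit : Ty
  | arrow : Ty → Ty → Ty
  | prod : Ty → Ty → Ty
  | sum : Ty → Ty → Ty
  | list : Ty → Ty

/-- Terms of PCF^list, with de Bruijn indices. -/
inductive Tm : Type
  | var : ℕ → Tm
  | lam : Tm → Tm
  | app : Tm → Tm → Tm
  | pair : Tm → Tm → Tm
  | fst : Tm → Tm
  | snd : Tm → Tm
  | skip : Tm
  | letUnit : Tm → Tm → Tm           -- let skip = M in N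
  | tt : Tm
  | ff : Tm
  | ite : Tm → Tm → Tm → Tm
  | notOp : Tm
  | andOp : Tm
  | xorOp : Tm
  | inl : Tm → Tm
  | inr : Tm → Tm
  | matchSum : Tm → Tm → Tm → Tm     -- match P with inl x ↦ M | inr y ↦ N
  | split : Tm
  | fix : Tm → Tm                    -- the fixpoint operator Y
  | err : Tm

/-- Boolean constants as terms. -/
def ofBool : Bool → Tm
  | true => .tt
  | false => .ff

/-- Shift the free variables `≥ c` of a term by `k`. -/
def liftTm (k : ℕ) : ℕ → Tm → Tm
  | c, .var n => if n < c then .var n else .var (n + k)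
  | c, .lam M => .lam (liftTm k (c+1) M)
  | c, .app M N => .app (liftTm k c M) (liftTm k c N)
  | c, .pair M N => .pair (liftTm k c M) (liftTm k c N)
  | c, .fst M => .fst (liftTm k c M)
  | c, .snd M => .snd (liftTm k c M)
  | c, .letUnit M N => .letUnit (liftTm k c M) (liftTm k c N)
  | c, .ite P M N => .ite (liftTm k c P) (liftTm k c M) (liftTm k c N)
  | c, .inl M => .inl (liftTm k c M)
  | c, .inr M => .inr (liftTm k c M)
  | c, .matchSum P M N =>
      .matchSum (liftTm k c P) (liftTm k (c+1) M) (liftTm k (c+1) N)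
  | c, .fix M => .fix (liftTm k c M)
  | _, t => t

/-- Capture-avoiding substitution of `N` for the variable `j`. -/
def subst (N : Tm) : ℕ → Tm → Tm
  | j, .var n => if n = j then liftTm j 0 N
                 else if j < n then .var (n - 1) else .var n
  | j, .lam M => .lam (subst N (j+1) M)
  | j, .app M P => .app (subst N j M) (subst N j P)
  | j, .pair M P => .pair (subst N j M) (subst N j P)
  | j, .fst M => .fst (subst N j M)
  | j, .snd M => .snd (subst N j M)
  | j, .letUnit M P => .letUnit (subst N j M) (subst N j P)
  | j, .ite P M Q => .ite (subst N j P) (subst N j M) (subst N j Q)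
  | j, .inl M => .inl (subst N j M)
  | j, .inr M => .inr (subst N j M)
  | j, .matchSum P M Q =>
      .matchSum (subst N j P) (subst N (j+1) M) (subst N (j+1) Q)
  | j, .fix M => .fix (subst N j M)
  | _, t => t

/-- First-order types. -/
inductive FirstOrder : Ty → Prop
  | bit : FirstOrder .bit
  | prod {A B} : FirstOrder A → FirstOrder B → FirstOrder (.prod A B)
  | list {A} : FirstOrder A → FirstOrder (.list A)

/-- Type equality generated by the coercion between `[A]` and
`1 ⊕ (A × [A])`. -/
inductive TyEq : Ty → Ty → Prop
  | refl (A) : TyEq A A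
  | symm {A B} : TyEq A B → TyEq B A
  | trans {A B C} : TyEq A B → TyEq B C → TyEq A C
  | fold (A) : TyEq (.sum .unit (.prod A (.list A))) (.list A)
  | arrow {A A' B B'} : TyEq A A' → TyEq B B' → TyEq (.arrow A B) (.arrow A' B')
  | prod {A A' B B'} : TyEq A A' → TyEq B B' → TyEq (.prod A B) (.prod A' B')
  | sum {A A' B B'} : TyEq A A' → TyEq B B' → TyEq (.sum A B) (.sum A' B')
  | list {A A'} : TyEq A A' → TyEq (.list A) (.list A')

/-- Typing judgment of PCF^list (contexts are lists of types, de Bruijn). -/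
inductive HasType : List Ty → Tm → Ty → Prop
  | var {Δ n A} : Δ[n]? = some A → HasType Δ (.var n) A
  | lam {Δ A B M} : HasType (A :: Δ) M B → HasType Δ (.lam M) (.arrow A B)
  | app {Δ M N A B} : HasType Δ M (.arrow A B) → HasType Δ N A →
      HasType Δ (.app M N) B
  | pair {Δ M N A B} : HasType Δ M A → HasType Δ N B →
      HasType Δ (.pair M N) (.prod A B)
  | fst {Δ M A B} : HasType Δ M (.prod A B) → HasType Δ (.fst M) A
  | snd {Δ M A B} : HasType Δ M (.prod A B) → HasType Δ (.snd M) B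
  | skip {Δ} : HasType Δ .skip .unit
  | letUnit {Δ M N B} : HasType Δ M .unit → HasType Δ N B →
      HasType Δ (.letUnit M N) B
  | tt {Δ} : HasType Δ .tt .bit
  | ff {Δ} : HasType Δ .ff .bit
  | ite {Δ P M N C} : HasType Δ P .bit → HasType Δ M C → HasType Δ N C →
      FirstOrder C → HasType Δ (.ite P M N) C
  | notOp {Δ} : HasType Δ .notOp (.arrow .bit .bit)
  | andOp {Δ} : HasType Δ .andOp (.arrow (.prod .bit .bit) .bit)
  | xorOp {Δ} : HasType Δ .xorOp (.arrow (.prod .bit .bit) .bit)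
  | inl {Δ M A B} : HasType Δ M A → HasType Δ (.inl M) (.sum A B)
  | inr {Δ M A B} : HasType Δ M B → HasType Δ (.inr M) (.sum A B)
  | matchSum {Δ P M N A B C} : HasType Δ P (.sum A B) →
      HasType (A :: Δ) M C → HasType (B :: Δ) N C →
      HasType Δ (.matchSum P M N) C
  | split {Δ A} :
      HasType Δ .split (.arrow (.list A) (.sum .unit (.prod A (.list A))))
  | fix {Δ M A} : HasType Δ M (.arrow A A) → HasType Δ (.fix M) A
  | err {Δ A} : HasType Δ .err A
  | conv {Δ M A B} : HasType Δ M A → TyEq A B → HasType Δ M B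

/-- Values. -/
inductive Value : Tm → Prop
  | lam (M) : Value (.lam M)
  | pair {M N} : Value M → Value N → Value (.pair M N)
  | inl {M} : Value M → Value (.inl M)
  | inr {M} : Value M → Value (.inr M)
  | skip : Value .skip
  | tt : Value .tt
  | ff : Value .ff
  | notOp : Value .notOp
  | andOp : Value .andOp
  | xorOp : Value .xorOp
  | split : Value .split

/-- The predicate "contains the error term Err as a subterm". -/
inductive ContainsErr : Tm → Prop
  | err : ContainsErr .err
  | lam {M} : ContainsErr M → ContainsErr (.lam M)
  | appL {M N} : ContainsErr M → ContainsErr (.app M N)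
  | appR {M N} : ContainsErr N → ContainsErr (.app M N)
  | pairL {M N} : ContainsErr M → ContainsErr (.pair M N)
  | pairR {M N} : ContainsErr N → ContainsErr (.pair M N)
  | fst {M} : ContainsErr M → ContainsErr (.fst M)
  | snd {M} : ContainsErr M → ContainsErr (.snd M)
  | letL {M N} : ContainsErr M → ContainsErr (.letUnit M N)
  | letR {M N} : ContainsErr N → ContainsErr (.letUnit M N)
  | ite1 {P M N} : ContainsErr P → ContainsErr (.ite P M N)
  | ite2 {P M N} : ContainsErr M → ContainsErr (.ite P M N)
  | ite3 {P M N} : ContainsErr N → ContainsErr (.ite P M N)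
  | inl {M} : ContainsErr M → ContainsErr (.inl M)
  | inr {M} : ContainsErr M → ContainsErr (.inr M)
  | match1 {P M N} : ContainsErr P → ContainsErr (.matchSum P M N)
  | match2 {P M N} : ContainsErr M → ContainsErr (.matchSum P M N)
  | match3 {P M N} : ContainsErr N → ContainsErr (.matchSum P M N)
  | fix {M} : ContainsErr M → ContainsErr (.fix M)

/-- Small-step reduction of PCF^list, closed under reduction of subterms. -/
inductive Step : Tm → Tm → Prop
  | beta (M N) : Step (.app (.lam M) N) (subst N 0 M)
  | fstPair (M N) : Step (.fst (.pair M N)) M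
  | sndPair (M N) : Step (.snd (.pair M N)) N
  | letU (M) : Step (.letUnit .skip M) M
  | iteTt (M N) : Step (.ite .tt M N) M
  | iteFf (M N) : Step (.ite .ff M N) N
  | splitRed (M) : Step (.app .split M) M
  | matchInl (P M N) : Step (.matchSum (.inl P) M N) (subst P 0 M)
  | matchInr (P M N) : Step (.matchSum (.inr P) M N) (subst P 0 N)
  | fixRed (M) : Step (.fix M) (.app M (.fix M))
  | notRed (b) : Step (.app .notOp (ofBool b)) (ofBool (!b))
  | andRed (a b) : Step (.app .andOp (.pair (ofBool a) (ofBool b))) (ofBool (a && b))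
  | xorRed (a b) : Step (.app .xorOp (.pair (ofBool a) (ofBool b)))
      (ofBool (Bool.xor a b))
  | lamC {M M'} : Step M M' → Step (.lam M) (.lam M')
  | appL {M M' N} : Step M M' → Step (.app M N) (.app M' N)
  | appR {M N N'} : Step N N' → Step (.app M N) (.app M N')
  | pairL {M M' N} : Step M M' → Step (.pair M N) (.pair M' N)
  | pairR {M N N'} : Step N N' → Step (.pair M N) (.pair M N')
  | fstC {M M'} : Step M M' → Step (.fst M) (.fst M')
  | sndC {M M'} : Step M M' → Step (.snd M) (.snd M')
  | letL {M M' N} : Step M M' → Step (.letUnit M N) (.letUnit M' N)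
  | letR {M N N'} : Step N N' → Step (.letUnit M N) (.letUnit M N')
  | ite1 {P P' M N} : Step P P' → Step (.ite P M N) (.ite P' M N)
  | ite2 {P M M' N} : Step M M' → Step (.ite P M N) (.ite P M' N)
  | ite3 {P M N N'} : Step N N' → Step (.ite P M N) (.ite P M N')
  | inlC {M M'} : Step M M' → Step (.inl M) (.inl M')
  | inrC {M M'} : Step M M' → Step (.inr M) (.inr M')
  | match1 {P P' M N} : Step P P' → Step (.matchSum P M N) (.matchSum P' M N)
  | match2 {P M M' N} : Step M M' → Step (.matchSum P M N) (.matchSum P M' N)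
  | match3 {P M N N'} : Step N N' → Step (.matchSum P M N) (.matchSum P M N')
  | fixC {M M'} : Step M M' → Step (.fix M) (.fix M')

/-- The type `bit^m` (right-nested products of `bit`). -/
def bitPow : ℕ → Ty
  | 0 => .unit
  | 1 => .bit
  | n + 2 => .prod .bit (bitPow (n + 1))

/-! ## The circuit-generating abstract machine

The state of the machine is a term `M` (whose free variables, the linked
variables `p₀, p₁, …`, appear at depth `d` as de Bruijn indices `d + j`),
a raw circuit `C` (a list of gates, most recent first, so that the circuit
is executed in reverse list order), an input wire set `I`, and a linking
function `L : List ℕ` mapping the machine variable `j` to the wire `L[j]`. -/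

/-- Execution of a machine circuit: the gates of `C` are executed in
reverse list order (gates are prepended as they are generated). -/
def runCircuit (C : List Gate) (v : ℕ → Bool) : ℕ → Bool :=
  C.foldr execGate v

/-- A wire is fresh for the machine state when it is neither an input wire,
nor a wire of the circuit, nor in the range of the linking function. -/
def FreshWire (I : Finset ℕ) (C : List Gate) (L : List ℕ) (w : ℕ) : Prop :=
  w ∉ I ∧ w ∉ circuitWires C ∧ w ∉ L

/-- First-order extensions of the linking function `L`, at depth `d`:
linked variables, products of extensions, and lists of extensions. -/
inductive FOExt (d : ℕ) (L : List ℕ) : Tm → Prop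
  | var {j} : j < L.length → FOExt d L (.var (d + j))
  | pair {M N} : FOExt d L M → FOExt d L N → FOExt d L (.pair M N)
  | nil : FOExt d L (.inl .skip)
  | cons {M N} : FOExt d L M → FOExt d L N → FOExt d L (.inr (.pair M N))

/-- `IteAux d L n V W U n' ps` : the branches `V` and `W` are first-order
extensions of `L` with the same shape; `U` is the first-order extension of
the same shape whose variables are the fresh machine variables
`n, n+1, …, n'-1` (pairwise distinct, occurring at depth `d`), and `ps`
collects, in order, the pairs of wires of the corresponding variables of
`V` and `W`. -/
inductive IteAux (d : ℕ) (L : List ℕ) : ℕ → Tm → Tm → Tm → ℕ → List (ℕ × ℕ) → Prop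
  | var {n j k} (hj : j < L.length) (hk : k < L.length) :
      IteAux d L n (.var (d + j)) (.var (d + k)) (.var (d + n)) (n + 1)
        [(L.getD j 0, L.getD k 0)]
  | pair {n V₁ W₁ U₁ n₁ p₁ V₂ W₂ U₂ n₂ p₂} :
      IteAux d L n V₁ W₁ U₁ n₁ p₁ → IteAux d L n₁ V₂ W₂ U₂ n₂ p₂ →
      IteAux d L n (.pair V₁ V₂) (.pair W₁ W₂) (.pair U₁ U₂) n₂ (p₁ ++ p₂)
  | nil {n} : IteAux d L n (.inl .skip) (.inl .skip) (.inl .skip) n []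
  | cons {n V₁ W₁ U₁ n₁ p₁ V₂ W₂ U₂ n₂ p₂} :
      IteAux d L n V₁ W₁ U₁ n₁ p₁ → IteAux d L n₁ V₂ W₂ U₂ n₂ p₂ →
      IteAux d L n (.inr (.pair V₁ V₂)) (.inr (.pair W₁ W₂))
        (.inr (.pair U₁ U₂)) n₂ (p₁ ++ p₂)

/-- The gates generated by an if-then-else on the wire `pw`: for each fresh
wire `u` and corresponding pair `(a, b)` of wires of the two branches, the
gates CNOT(u; (pw,true),(a,true)) and CNOT(u; (pw,false),(b,true)),
in generation order. -/
def iteGates (pw : ℕ) : List ℕ → List (ℕ × ℕ) → List Gate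
  | u :: us, (a, b) :: ps =>
      ⟨u, [(pw, true), (a, true)]⟩ :: ⟨u, [(pw, false), (b, true)]⟩ ::
        iteGates pw us ps
  | _, _ => []

/-- The rewrite relation `→_am` on circuit-generating abstract machines.
`AMStep I d M C L N C' L'` : at binder depth `d`, the machine
`(M, (I, C), L)` rewrites to `(N, (I, C'), L')`.  The generic rules leave
the circuit untouched; the rules for booleans record gates in the circuit
and allocate fresh wires; the relation is closed under arbitrary
beta-contexts. -/
inductive AMStep (I : Finset ℕ) : ℕ → Tm → List Gate → List ℕ →
    Tm → List Gate → List ℕ → Prop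
  /- generic rules -/
  | beta (d M N C L) : AMStep I d (.app (.lam M) N) C L (subst N 0 M) C L
  | fstPair (d M N C L) : AMStep I d (.fst (.pair M N)) C L M C L
  | sndPair (d M N C L) : AMStep I d (.snd (.pair M N)) C L N C L
  | letU (d M C L) : AMStep I d (.letUnit .skip M) C L M C L
  | splitRed (d M C L) : AMStep I d (.app .split M) C L M C L
  | matchInl (d P M N C L) :
      AMStep I d (.matchSum (.inl P) M N) C L (subst P 0 M) C L
  | matchInr (d P M N C L) :
      AMStep I d (.matchSum (.inr P) M N) C L (subst P 0 N) C L
  | fixRed (d M C L) : AMStep I d (.fix M) C L (.app M (.fix M)) C L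
  /- rules for booleans -/
  | ffRed (d C L w) (hw : FreshWire I C L w) :
      AMStep I d .ff C L (.var (d + L.length)) C (L ++ [w])
  | ttRed (d C L w) (hw : FreshWire I C L w) :
      AMStep I d .tt C L (.var (d + L.length)) (⟨w, []⟩ :: C) (L ++ [w])
  | notRed (d C L j w) (hj : j < L.length) (hw : FreshWire I C L w) :
      AMStep I d (.app .notOp (.var (d + j))) C L (.var (d + L.length))
        (⟨w, [(L.getD j 0, false)]⟩ :: C) (L ++ [w])
  | andRed (d C L j k w) (hj : j < L.length) (hk : k < L.length)
      (hw : FreshWire I C L w) :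
      AMStep I d (.app .andOp (.pair (.var (d + j)) (.var (d + k)))) C L
        (.var (d + L.length))
        (⟨w, [(L.getD j 0, true), (L.getD k 0, true)]⟩ :: C) (L ++ [w])
  | xorRed (d C L j k w) (hj : j < L.length) (hk : k < L.length)
      (hw : FreshWire I C L w) :
      AMStep I d (.app .xorOp (.pair (.var (d + j)) (.var (d + k)))) C L
        (.var (d + L.length))
        (⟨w, [(L.getD j 0, true)]⟩ :: ⟨w, [(L.getD k 0, true)]⟩ :: C)
        (L ++ [w])
  | iteRed (d C L j V W U n ps ws) (hj : j < L.length)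
      (ha : IteAux d L L.length V W U n ps)
      (hlen : ws.length = ps.length) (hnd : ws.Nodup)
      (hfr : ∀ w ∈ ws, FreshWire I C L w) :
      AMStep I d (.ite (.var (d + j)) V W) C L
        U ((iteGates (L.getD j 0) ws ps).reverse ++ C) (L ++ ws)
  | iteErr (d C L j V W) (hj : j < L.length)
      (hV : FOExt d L V) (hW : FOExt d L W)
      (hns : ¬ ∃ U n ps, IteAux d L L.length V W U n ps) :
      AMStep I d (.ite (.var (d + j)) V W) C L .err C L
  /- closure under beta-contexts -/
  | lamC {d M C L M' C' L'} : AMStep I (d+1) M C L M' C' L' →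
      AMStep I d (.lam M) C L (.lam M') C' L'
  | appL {d M C L M' C' L'} (N) : AMStep I d M C L M' C' L' →
      AMStep I d (.app M N) C L (.app M' N) C' L'
  | appR {d N C L N' C' L'} (M) : AMStep I d N C L N' C' L' →
      AMStep I d (.app M N) C L (.app M N') C' L'
  | pairL {d M C L M' C' L'} (N) : AMStep I d M C L M' C' L' →
      AMStep I d (.pair M N) C L (.pair M' N) C' L'
  | pairR {d N C L N' C' L'} (M) : AMStep I d N C L N' C' L' →
      AMStep I d (.pair M N) C L (.pair M N') C' L'
  | fstC {d M C L M' C' L'} : AMStep I d M C L M' C' L' →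
      AMStep I d (.fst M) C L (.fst M') C' L'
  | sndC {d M C L M' C' L'} : AMStep I d M C L M' C' L' →
      AMStep I d (.snd M) C L (.snd M') C' L'
  | letL {d M C L M' C' L'} (N) : AMStep I d M C L M' C' L' →
      AMStep I d (.letUnit M N) C L (.letUnit M' N) C' L'
  | letR {d N C L N' C' L'} (M) : AMStep I d N C L N' C' L' →
      AMStep I d (.letUnit M N) C L (.letUnit M N') C' L'
  | ite1 {d P C L P' C' L'} (M N) : AMStep I d P C L P' C' L' →
      AMStep I d (.ite P M N) C L (.ite P' M N) C' L'
  | ite2 {d M C L M' C' L'} (P N) : AMStep I d M C L M' C' L' →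
      AMStep I d (.ite P M N) C L (.ite P M' N) C' L'
  | ite3 {d N C L N' C' L'} (P M) : AMStep I d N C L N' C' L' →
      AMStep I d (.ite P M N) C L (.ite P M N') C' L'
  | inlC {d M C L M' C' L'} : AMStep I d M C L M' C' L' →
      AMStep I d (.inl M) C L (.inl M') C' L'
  | inrC {d M C L M' C' L'} : AMStep I d M C L M' C' L' →
      AMStep I d (.inr M) C L (.inr M') C' L'
  | match1 {d P C L P' C' L'} (M N) : AMStep I d P C L P' C' L' →
      AMStep I d (.matchSum P M N) C L (.matchSum P' M N) C' L'
  | match2 {d M C L M' C' L'} (P N) : AMStep I (d+1) M C L M' C' L' →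
      AMStep I d (.matchSum P M N) C L (.matchSum P M' N) C' L'
  | match3 {d N C L N' C' L'} (P M) : AMStep I (d+1) N C L N' C' L' →
      AMStep I d (.matchSum P M N) C L (.matchSum P M N') C' L'
  | fixC {d M C L M' C' L'} : AMStep I d M C L M' C' L' →
      AMStep I d (.fix M) C L (.fix M') C' L'

/-- `→_am` on machine states (term, circuit, linking function), at top
level (depth 0). -/
def AMStepT (I : Finset ℕ) (s t : Tm × List Gate × List ℕ) : Prop :=
  AMStep I 0 s.1 s.2.1 s.2.2 t.1 t.2.1 t.2.2

/-- Values of the abstract machine: ordinary values together with the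
linked variables `pᵢ`. -/
inductive MValue : Tm → Prop
  | var (n) : MValue (.var n)
  | lam (M) : MValue (.lam M)
  | pair {M N} : MValue M → MValue N → MValue (.pair M N)
  | inl {M} : MValue M → MValue (.inl M)
  | inr {M} : MValue M → MValue (.inr M)
  | skip : MValue .skip
  | tt : MValue .tt
  | ff : MValue .ff
  | notOp : MValue .notOp
  | andOp : MValue .andOp
  | xorOp : MValue .xorOp
  | split : MValue .split

/-! ### Auxiliary machinery for the progress proof -/

section ProgressAux

/-- Head classes of types. -/
inductive Cls : Type
  | bit | unit | arrow | prod | sum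
deriving DecidableEq

/-- Shape of a type along a path of left/right choices, unfolding lists. -/
def sh : Ty → List Bool → Cls
  | .bit, _ => .bit
  | .unit, [] => .unit
  | .unit, _ :: _ => .bit
  | .arrow _ _, [] => .arrow
  | .arrow A _, false :: p => sh A p
  | .arrow _ B, true :: p => sh B p
  | .prod _ _, [] => .prod
  | .prod A _, false :: p => sh A p
  | .prod _ B, true :: p => sh B p
  | .sum _ _, [] => .sum
  | .sum A _, false :: p => sh A p
  | .sum _ B, true :: p => sh B p
  | .list _, [] => .sum
  | .list _, false :: p => sh .unit p
  | .list A, true :: p => sh (.prod A (.list A)) p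
termination_by t p => p.length

lemma sh_list_congr {A A' : Ty} (h : ∀ p, sh A p = sh A' p) :
    ∀ p, sh (.list A) p = sh (.list A') p := by
  have main : ∀ n p, p.length ≤ n → sh (.list A) p = sh (.list A') p := by
    intro n
    induction n with
    | zero =>
      intro p hp
      have : p = [] := by cases p <;> simp_all
      subst this; simp [sh]
    | succ n ih =>
      intro p hp
      match p with
      | [] => simp [sh]
      | false :: q => simp [sh]
      | [true] => simp [sh]
      | true :: false :: r => simpa [sh] using h r
      | true :: true :: r =>
        have hr : r.length ≤ n := by
          simp only [List.length_cons] at hp; omega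
        simpa [sh] using ih r hr
  exact fun p => main p.length p le_rfl

lemma tyEq_sh {A B : Ty} (h : TyEq A B) : ∀ p, sh A p = sh B p := by
  induction h with
  | refl A => intro p; rfl
  | symm _ ih => intro p; exact (ih p).symm
  | trans _ _ ih1 ih2 => intro p; exact (ih1 p).trans (ih2 p)
  | fold A => intro p; rcases p with _ | ⟨_ | _, q⟩ <;> simp [sh]
  | arrow _ _ ih1 ih2 =>
    intro p
    rcases p with _ | ⟨_ | _, q⟩
    · simp [sh]
    · simpa [sh] using ih1 q
    · simpa [sh] using ih2 q
  | prod _ _ ih1 ih2 =>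
    intro p
    rcases p with _ | ⟨_ | _, q⟩
    · simp [sh]
    · simpa [sh] using ih1 q
    · simpa [sh] using ih2 q
  | sum _ _ ih1 ih2 =>
    intro p
    rcases p with _ | ⟨_ | _, q⟩
    · simp [sh]
    · simpa [sh] using ih1 q
    · simpa [sh] using ih2 q
  | list _ ih => exact sh_list_congr ih

/-- The information extractable from a typing of a value form. -/
def Canon (Δ : List Ty) : Tm → Ty → Prop
  | .var n, A => ∃ B, Δ[n]? = some B ∧ ∀ p, sh B p = sh A p
  | .lam _, A => sh A [] = .arrow
  | .pair M N, A => ∃ A₁ A₂, HasType Δ M A₁ ∧ HasType Δ N A₂ ∧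
      ∀ p, sh (Ty.prod A₁ A₂) p = sh A p
  | .inl M, A => sh A [] = .sum ∧ ∃ A₁, HasType Δ M A₁ ∧
      ∀ p, sh A₁ p = sh A (false :: p)
  | .inr M, A => sh A [] = .sum ∧ ∃ A₂, HasType Δ M A₂ ∧
      ∀ p, sh A₂ p = sh A (true :: p)
  | .skip, A => ∀ p, sh Ty.unit p = sh A p
  | .tt, A => ∀ p, sh Ty.bit p = sh A p
  | .ff, A => ∀ p, sh Ty.bit p = sh A p
  | .notOp, A => ∀ p, sh (Ty.arrow .bit .bit) p = sh A p
  | .andOp, A => ∀ p, sh (Ty.arrow (.prod .bit .bit) .bit) p = sh A p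
  | .xorOp, A => ∀ p, sh (Ty.arrow (.prod .bit .bit) .bit) p = sh A p
  | .split, A => sh A [] = .arrow
  | _, _ => True

lemma canon_trans {Δ : List Ty} {V : Tm} {A B : Ty}
    (hc : Canon Δ V A) (h : ∀ p, sh A p = sh B p) : Canon Δ V B := by
  cases V <;> simp only [Canon] at hc ⊢ <;> try trivial
  case var n =>
    obtain ⟨B', h1, h2⟩ := hc
    exact ⟨B', h1, fun p => (h2 p).trans (h p)⟩
  case lam => rw [← h []]; exact hc
  case pair M N =>
    obtain ⟨A₁, A₂, h1, h2, he⟩ := hc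
    exact ⟨A₁, A₂, h1, h2, fun p => (he p).trans (h p)⟩
  case inl M =>
    obtain ⟨hr, A₁, h1, he⟩ := hc
    exact ⟨by rw [← h []]; exact hr, A₁, h1, fun p => (he p).trans (h (false :: p))⟩
  case inr M =>
    obtain ⟨hr, A₂, h2, he⟩ := hc
    exact ⟨by rw [← h []]; exact hr, A₂, h2, fun p => (he p).trans (h (true :: p))⟩
  case skip => exact fun p => (hc p).trans (h p)
  case tt => exact fun p => (hc p).trans (h p)
  case ff => exact fun p => (hc p).trans (h p)
  case notOp => exact fun p => (hc p).trans (h p)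
  case andOp => exact fun p => (hc p).trans (h p)
  case xorOp => exact fun p => (hc p).trans (h p)
  case split => rw [← h []]; exact hc

lemma canon {Δ : List Ty} {V : Tm} {A : Ty} (ht : HasType Δ V A) : Canon Δ V A := by
  induction ht with
  | var h => exact ⟨_, h, fun p => rfl⟩
  | lam h ih => simp only [Canon]; simp [sh]
  | app h1 h2 ih1 ih2 => trivial
  | pair h1 h2 ih1 ih2 => exact ⟨_, _, h1, h2, fun p => rfl⟩
  | fst h ih => trivial
  | snd h ih => trivial
  | skip => exact fun p => rfl
  | letUnit h1 h2 ih1 ih2 => trivial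
  | tt => exact fun p => rfl
  | ff => exact fun p => rfl
  | ite h1 h2 h3 h4 ih1 ih2 ih3 => trivial
  | notOp => exact fun p => rfl
  | andOp => exact fun p => rfl
  | xorOp => exact fun p => rfl
  | inl h ih =>
    refine ⟨by simp [sh], _, h, fun p => ?_⟩
    simp [sh]
  | inr h ih =>
    refine ⟨by simp [sh], _, h, fun p => ?_⟩
    simp [sh]
  | matchSum h1 h2 h3 ih1 ih2 ih3 => trivial
  | split => simp only [Canon]; simp [sh]
  | fix h ih => trivial
  | err => trivial
  | conv h e ih => exact canon_trans ih (tyEq_sh e)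

/-! #### First-order "good" shapes -/

def GoodAt (f : List Bool → Cls) (p : List Bool) : Prop :=
  f p ≠ .arrow ∧
  (f p = .sum → f (p ++ [false]) = .unit ∧ f (p ++ [true]) = .prod) ∧
  (f p = .prod → f (p ++ [false]) ≠ .unit ∧ f (p ++ [true]) ≠ .unit)

def Good (f : List Bool → Cls) : Prop := f [] ≠ .unit ∧ ∀ p, GoodAt f p

lemma good_ext {f g : List Bool → Cls} (h : ∀ p, f p = g p) (hf : Good f) : Good g := by
  have : f = g := funext h
  subst this; exact hf

lemma goodAt_child {f : List Bool → Cls} (hf : ∀ p, GoodAt f p) (b : Bool) :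
    ∀ p, GoodAt (fun p => f (b :: p)) p := by
  intro p
  have := hf (b :: p)
  simp only [GoodAt, List.cons_append] at this ⊢
  exact this

lemma good_child {f : List Bool → Cls} (hg : Good f) (b : Bool) (hb : f [b] ≠ .unit) :
    Good (fun p => f (b :: p)) := ⟨hb, goodAt_child hg.2 b⟩

lemma good_child_sh {A A' : Ty} (hg : Good (sh A)) (b : Bool)
    (hch : ∀ p, sh A' p = sh A (b :: p)) (hb : sh A [b] ≠ .unit) : Good (sh A') :=
  good_ext (f := fun p => sh A (b :: p)) (fun p => (hch p).symm) (good_child hg b hb)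

lemma fo_root {A : Ty} (h : FirstOrder A) :
    sh A [] ≠ .unit ∧ sh A [] ≠ .arrow := by cases h <;> simp [sh]

lemma goodAt_prod {A B : Ty} (ha : ∀ p, GoodAt (sh A) p) (hb : ∀ p, GoodAt (sh B) p)
    (hra : sh A [] ≠ .unit) (hrb : sh B [] ≠ .unit) :
    ∀ p, GoodAt (sh (.prod A B)) p := by
  intro p
  match p with
  | [] =>
    refine ⟨by simp [sh], by simp [sh], fun _ => ⟨?_, ?_⟩⟩
    · simpa [sh] using hra
    · simpa [sh] using hrb
  | false :: q =>
    have := ha q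
    simp only [GoodAt, List.cons_append] at this ⊢
    simpa [sh] using this
  | true :: q =>
    have := hb q
    simp only [GoodAt, List.cons_append] at this ⊢
    simpa [sh] using this

lemma goodAt_list {A : Ty} (ha : ∀ p, GoodAt (sh A) p) (hra : sh A [] ≠ .unit) :
    ∀ p, GoodAt (sh (.list A)) p := by
  have main : ∀ n p, p.length ≤ n → GoodAt (sh (.list A)) p := by
    intro n
    induction n with
    | zero =>
      intro p hp
      have : p = [] := by cases p <;> simp_all
      subst this
      exact ⟨by simp [sh], fun _ => ⟨by simp [sh], by simp [sh]⟩, by simp [sh]⟩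
    | succ n ih =>
      intro p hp
      match p with
      | [] =>
        exact ⟨by simp [sh], fun _ => ⟨by simp [sh], by simp [sh]⟩, by simp [sh]⟩
      | [false] => exact ⟨by simp [sh], by simp [sh], by simp [sh]⟩
      | false :: c :: r => exact ⟨by simp [sh], by simp [sh], by simp [sh]⟩
      | [true] =>
        refine ⟨by simp [sh], by simp [sh], fun _ => ⟨?_, by simp [sh]⟩⟩
        simpa [sh] using hra
      | true :: false :: r =>
        have := ha r
        simp only [GoodAt, List.cons_append] at this ⊢
        simpa [sh] using this
      | true :: true :: r =>
        have hr : r.length ≤ n := by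
          simp only [List.length_cons] at hp; omega
        have := ih r hr
        simp only [GoodAt, List.cons_append] at this ⊢
        simpa [sh] using this
  exact fun p => main p.length p le_rfl

lemma fo_good {A : Ty} (h : FirstOrder A) : Good (sh A) := by
  induction h with
  | bit => exact ⟨by simp [sh], fun p => ⟨by simp [sh], by simp [sh], by simp [sh]⟩⟩
  | prod h1 h2 ih1 ih2 =>
    exact ⟨by simp [sh], goodAt_prod ih1.2 ih2.2 (fo_root h1).1 (fo_root h2).1⟩
  | list h1 ih1 => exact ⟨by simp [sh], goodAt_list ih1.2 (fo_root h1).1⟩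

/-! #### Fresh wires -/

def gateF (g : Gate) : Finset ℕ := insert g.active (g.controls.map Prod.fst).toFinset

def circF : List Gate → Finset ℕ
  | [] => ∅
  | g :: C => gateF g ∪ circF C

lemma mem_circF : ∀ (C : List Gate) (w : ℕ), w ∈ circuitWires C → w ∈ circF C := by
  intro C
  induction C with
  | nil => intro w h; obtain ⟨g, hg, _⟩ := h; cases hg
  | cons g' C ih =>
    intro w h
    obtain ⟨g, hg, hw⟩ := h
    simp only [circF, Finset.mem_union]
    rcases List.mem_cons.1 hg with rfl | hg'
    · left
      simp only [Gate.wires, Set.mem_insert_iff, Set.mem_setOf_eq] at hw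
      rcases hw with rfl | ⟨b, hb⟩
      · exact Finset.mem_insert_self _ _
      · exact Finset.mem_insert_of_mem (List.mem_toFinset.2 (List.mem_map.2 ⟨(w, b), hb, rfl⟩))
    · right; exact ih w ⟨g, hg', hw⟩

lemma exists_fresh_list (I : Finset ℕ) (C : List Gate) (L : List ℕ) (k : ℕ) :
    ∃ ws : List ℕ, ws.length = k ∧ ws.Nodup ∧ ∀ w ∈ ws, FreshWire I C L w := by
  classical
  set S : Finset ℕ := I ∪ circF C ∪ L.toFinset with hS
  refine ⟨List.range' (S.sup id + 1) k, by simp, List.nodup_range', ?_⟩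
  intro w hw
  have hw1 : S.sup id + 1 ≤ w := (List.mem_range'_1.1 hw).1
  have hnot : w ∉ S := by
    intro hmem
    have := Finset.le_sup (f := id) hmem
    simp only [id] at this
    omega
  refine ⟨fun h => hnot ?_, fun h => hnot ?_, fun h => hnot ?_⟩
  · exact Finset.mem_union_left _ (Finset.mem_union_left _ h)
  · exact Finset.mem_union_left _ (Finset.mem_union_right _ (mem_circF C w h))
  · exact Finset.mem_union_right _ (List.mem_toFinset.2 h)

lemma exists_fresh (I : Finset ℕ) (C : List Gate) (L : List ℕ) :
    ∃ w, FreshWire I C L w := by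
  obtain ⟨ws, hlen, -, hfr⟩ := exists_fresh_list I C L 1
  rcases ws with _ | ⟨w, ws⟩
  · simp at hlen
  · exact ⟨w, hfr w (by simp)⟩

/-! #### Contexts of bits -/

def BitCtx (Δ : List Ty) : Prop := ∀ (n : ℕ) B, Δ[n]? = some B → B = Ty.bit

lemma get_replicate : ∀ {len n : ℕ} {B : Ty},
    (List.replicate len Ty.bit)[n]? = some B → B = Ty.bit ∧ n < len := by
  intro len
  induction len with
  | zero => intro n B h; simp [List.replicate] at h
  | succ m ih =>
    intro n B h
    cases n with
    | zero =>
      simp [List.replicate] at h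
      exact ⟨h.symm, Nat.succ_pos _⟩
    | succ k =>
      have h' : (List.replicate m Ty.bit)[k]? = some B := by
        simpa [List.replicate] using h
      obtain ⟨h1, h2⟩ := ih h'
      exact ⟨h1, Nat.succ_lt_succ h2⟩

lemma bitCtx_replicate {len : ℕ} : BitCtx (List.replicate len Ty.bit) :=
  fun _ _ h => (get_replicate h).1

/-! #### Canonical forms -/

lemma bit_canon {Δ : List Ty} {V : Tm} {A : Ty} (hv : MValue V) (ht : HasType Δ V A)
    (hA : sh A [] = .bit) :
    V = .tt ∨ V = .ff ∨ ∃ n B, V = .var n ∧ Δ[n]? = some B := by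
  cases hv with
  | tt => exact Or.inl rfl
  | ff => exact Or.inr (Or.inl rfl)
  | var n =>
    have hc := canon ht; simp only [Canon] at hc
    obtain ⟨B, hB, -⟩ := hc
    exact Or.inr (Or.inr ⟨n, B, rfl, hB⟩)
  | lam M =>
    have hc := canon ht; simp only [Canon] at hc
    rw [hA] at hc; simp at hc
  | pair h1 h2 =>
    have hc := canon ht; simp only [Canon] at hc
    obtain ⟨A₁, A₂, -, -, he⟩ := hc
    have := he []; rw [hA] at this; simp [sh] at this
  | inl h1 =>
    have hc := canon ht; simp only [Canon] at hc
    have := hc.1; rw [hA] at this; simp at this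
  | inr h1 =>
    have hc := canon ht; simp only [Canon] at hc
    have := hc.1; rw [hA] at this; simp at this
  | skip =>
    have hc := canon ht; simp only [Canon] at hc
    have := hc []; rw [hA] at this; simp [sh] at this
  | notOp =>
    have hc := canon ht; simp only [Canon] at hc
    have := hc []; rw [hA] at this; simp [sh] at this
  | andOp =>
    have hc := canon ht; simp only [Canon] at hc
    have := hc []; rw [hA] at this; simp [sh] at this
  | xorOp =>
    have hc := canon ht; simp only [Canon] at hc
    have := hc []; rw [hA] at this; simp [sh] at this
  | split =>
    have hc := canon ht; simp only [Canon] at hc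
    rw [hA] at hc; simp at hc

lemma unit_canon {Δ : List Ty} {V : Tm} {A : Ty} (hΔ : BitCtx Δ) (hv : MValue V)
    (ht : HasType Δ V A) (hA : sh A [] = .unit) : V = .skip := by
  cases hv with
  | skip => rfl
  | var n =>
    have hc := canon ht; simp only [Canon] at hc
    obtain ⟨B, hB, he⟩ := hc
    have hb := hΔ n B hB; subst hb
    have := he []; rw [hA] at this; simp [sh] at this
  | tt =>
    have hc := canon ht; simp only [Canon] at hc
    have := hc []; rw [hA] at this; simp [sh] at this
  | ff =>
    have hc := canon ht; simp only [Canon] at hc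
    have := hc []; rw [hA] at this; simp [sh] at this
  | lam M =>
    have hc := canon ht; simp only [Canon] at hc
    rw [hA] at hc; simp at hc
  | pair h1 h2 =>
    have hc := canon ht; simp only [Canon] at hc
    obtain ⟨A₁, A₂, -, -, he⟩ := hc
    have := he []; rw [hA] at this; simp [sh] at this
  | inl h1 =>
    have hc := canon ht; simp only [Canon] at hc
    have := hc.1; rw [hA] at this; simp at this
  | inr h1 =>
    have hc := canon ht; simp only [Canon] at hc
    have := hc.1; rw [hA] at this; simp at this
  | notOp =>
    have hc := canon ht; simp only [Canon] at hc
    have := hc []; rw [hA] at this; simp [sh] at this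
  | andOp =>
    have hc := canon ht; simp only [Canon] at hc
    have := hc []; rw [hA] at this; simp [sh] at this
  | xorOp =>
    have hc := canon ht; simp only [Canon] at hc
    have := hc []; rw [hA] at this; simp [sh] at this
  | split =>
    have hc := canon ht; simp only [Canon] at hc
    rw [hA] at hc; simp at hc

lemma prod_canon {Δ : List Ty} {V : Tm} {A : Ty} (hΔ : BitCtx Δ) (hv : MValue V)
    (ht : HasType Δ V A) (hA : sh A [] = .prod) :
    ∃ M N, V = .pair M N ∧ MValue M ∧ MValue N ∧
      ∃ A₁ A₂, HasType Δ M A₁ ∧ HasType Δ N A₂ ∧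
        (∀ p, sh A₁ p = sh A (false :: p)) ∧ (∀ p, sh A₂ p = sh A (true :: p)) := by
  cases hv with
  | pair h1 h2 =>
    have hc := canon ht; simp only [Canon] at hc
    obtain ⟨A₁, A₂, ht1, ht2, he⟩ := hc
    refine ⟨_, _, rfl, h1, h2, A₁, A₂, ht1, ht2, fun p => ?_, fun p => ?_⟩
    · have := he (false :: p); simpa [sh] using this
    · have := he (true :: p); simpa [sh] using this
  | var n =>
    have hc := canon ht; simp only [Canon] at hc
    obtain ⟨B, hB, he⟩ := hc
    have hb := hΔ n B hB; subst hb
    have := he []; rw [hA] at this; simp [sh] at this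
  | tt =>
    have hc := canon ht; simp only [Canon] at hc
    have := hc []; rw [hA] at this; simp [sh] at this
  | ff =>
    have hc := canon ht; simp only [Canon] at hc
    have := hc []; rw [hA] at this; simp [sh] at this
  | skip =>
    have hc := canon ht; simp only [Canon] at hc
    have := hc []; rw [hA] at this; simp [sh] at this
  | lam M =>
    have hc := canon ht; simp only [Canon] at hc
    rw [hA] at hc; simp at hc
  | inl h1 =>
    have hc := canon ht; simp only [Canon] at hc
    have := hc.1; rw [hA] at this; simp at this
  | inr h1 =>
    have hc := canon ht; simp only [Canon] at hc
    have := hc.1; rw [hA] at this; simp at this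
  | notOp =>
    have hc := canon ht; simp only [Canon] at hc
    have := hc []; rw [hA] at this; simp [sh] at this
  | andOp =>
    have hc := canon ht; simp only [Canon] at hc
    have := hc []; rw [hA] at this; simp [sh] at this
  | xorOp =>
    have hc := canon ht; simp only [Canon] at hc
    have := hc []; rw [hA] at this; simp [sh] at this
  | split =>
    have hc := canon ht; simp only [Canon] at hc
    rw [hA] at hc; simp at hc

lemma sum_canon {Δ : List Ty} {V : Tm} {A : Ty} (hΔ : BitCtx Δ) (hv : MValue V)
    (ht : HasType Δ V A) (hA : sh A [] = .sum) :
    (∃ M, V = .inl M ∧ MValue M ∧ ∃ A₁, HasType Δ M A₁ ∧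
        ∀ p, sh A₁ p = sh A (false :: p)) ∨
    (∃ M, V = .inr M ∧ MValue M ∧ ∃ A₂, HasType Δ M A₂ ∧
        ∀ p, sh A₂ p = sh A (true :: p)) := by
  cases hv with
  | inl h1 =>
    have hc := canon ht; simp only [Canon] at hc
    obtain ⟨-, A₁, ht1, he⟩ := hc
    exact Or.inl ⟨_, rfl, h1, A₁, ht1, he⟩
  | inr h1 =>
    have hc := canon ht; simp only [Canon] at hc
    obtain ⟨-, A₂, ht2, he⟩ := hc
    exact Or.inr ⟨_, rfl, h1, A₂, ht2, he⟩
  | var n =>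
    have hc := canon ht; simp only [Canon] at hc
    obtain ⟨B, hB, he⟩ := hc
    have hb := hΔ n B hB; subst hb
    have := he []; rw [hA] at this; simp [sh] at this
  | tt =>
    have hc := canon ht; simp only [Canon] at hc
    have := hc []; rw [hA] at this; simp [sh] at this
  | ff =>
    have hc := canon ht; simp only [Canon] at hc
    have := hc []; rw [hA] at this; simp [sh] at this
  | skip =>
    have hc := canon ht; simp only [Canon] at hc
    have := hc []; rw [hA] at this; simp [sh] at this
  | lam M =>
    have hc := canon ht; simp only [Canon] at hc
    rw [hA] at hc; simp at hc
  | pair h1 h2 =>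
    have hc := canon ht; simp only [Canon] at hc
    obtain ⟨A₁, A₂, -, -, he⟩ := hc
    have := he []; rw [hA] at this; simp [sh] at this
  | notOp =>
    have hc := canon ht; simp only [Canon] at hc
    have := hc []; rw [hA] at this; simp [sh] at this
  | andOp =>
    have hc := canon ht; simp only [Canon] at hc
    have := hc []; rw [hA] at this; simp [sh] at this
  | xorOp =>
    have hc := canon ht; simp only [Canon] at hc
    have := hc []; rw [hA] at this; simp [sh] at this
  | split =>
    have hc := canon ht; simp only [Canon] at hc
    rw [hA] at hc; simp at hc

lemma arrow_canon {Δ : List Ty} {V : Tm} {A B : Ty} (hΔ : BitCtx Δ) (hv : MValue V)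
    (ht : HasType Δ V (.arrow A B)) :
    (∃ M, V = .lam M) ∨ V = .split ∨ (V = .notOp ∧ sh A [] = .bit) ∨
    ((V = .andOp ∨ V = .xorOp) ∧ sh A [] = .prod ∧
      sh A [false] = .bit ∧ sh A [true] = .bit) := by
  cases hv with
  | lam M => exact Or.inl ⟨M, rfl⟩
  | split => exact Or.inr (Or.inl rfl)
  | notOp =>
    have hc := canon ht; simp only [Canon] at hc
    refine Or.inr (Or.inr (Or.inl ⟨rfl, ?_⟩))
    have := hc [false]; simpa [sh] using this.symm
  | andOp =>
    have hc := canon ht; simp only [Canon] at hc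
    refine Or.inr (Or.inr (Or.inr ⟨Or.inl rfl, ?_, ?_, ?_⟩))
    · have := hc [false]; simpa [sh] using this.symm
    · have := hc [false, false]; simpa [sh] using this.symm
    · have := hc [false, true]; simpa [sh] using this.symm
  | xorOp =>
    have hc := canon ht; simp only [Canon] at hc
    refine Or.inr (Or.inr (Or.inr ⟨Or.inr rfl, ?_, ?_, ?_⟩))
    · have := hc [false]; simpa [sh] using this.symm
    · have := hc [false, false]; simpa [sh] using this.symm
    · have := hc [false, true]; simpa [sh] using this.symm
  | var n =>
    have hc := canon ht; simp only [Canon] at hc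
    obtain ⟨B', hB, he⟩ := hc
    have hb := hΔ n B' hB; subst hb
    have := he []; simp [sh] at this
  | tt =>
    have hc := canon ht; simp only [Canon] at hc
    have := hc []; simp [sh] at this
  | ff =>
    have hc := canon ht; simp only [Canon] at hc
    have := hc []; simp [sh] at this
  | skip =>
    have hc := canon ht; simp only [Canon] at hc
    have := hc []; simp [sh] at this
  | pair h1 h2 =>
    have hc := canon ht; simp only [Canon] at hc
    obtain ⟨A₁, A₂, -, -, he⟩ := hc
    have := he []; simp [sh] at this
  | inl h1 =>
    have hc := canon ht; simp only [Canon] at hc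
    have := hc.1; simp [sh] at this
  | inr h1 =>
    have hc := canon ht; simp only [Canon] at hc
    have := hc.1; simp [sh] at this

/-! #### Values of first-order type are machine-reducible or first-order
extensions -/

lemma fo_val (I : Finset ℕ) (cir : List Gate) (L : List ℕ) :
    ∀ {V : Tm}, MValue V → ∀ {A : Ty},
      HasType (List.replicate L.length Ty.bit) V A → Good (sh A) →
      FOExt 0 L V ∨ ∃ N C' L', AMStep I 0 V cir L N C' L' := by
  intro V hv
  induction hv with
  | var n =>
    intro A ht hg
    have hc := canon ht; simp only [Canon] at hc
    obtain ⟨B, hB, -⟩ := hc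
    obtain ⟨-, hn⟩ := get_replicate hB
    left
    have := FOExt.var (d := 0) (L := L) (j := n) hn
    simpa using this
  | lam M =>
    intro A ht hg
    have hc := canon ht; simp only [Canon] at hc
    exact absurd hc (hg.2 []).1
  | pair hM hN ihM ihN =>
    intro A ht hg
    have hc := canon ht; simp only [Canon] at hc
    obtain ⟨A₁, A₂, h1, h2, he⟩ := hc
    have hroot : sh A [] = .prod := by rw [← he []]; simp [sh]
    have hpc := (hg.2 []).2.2 hroot
    have hg1 : Good (sh A₁) := by
      refine good_child_sh hg false (fun p => ?_) (by simpa using hpc.1)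
      rw [← he (false :: p)]; simp [sh]
    have hg2 : Good (sh A₂) := by
      refine good_child_sh hg true (fun p => ?_) (by simpa using hpc.2)
      rw [← he (true :: p)]; simp [sh]
    rcases ihM h1 hg1 with hfo1 | ⟨N', C', L', hs⟩
    · rcases ihN h2 hg2 with hfo2 | ⟨N', C', L', hs⟩
      · exact Or.inl (FOExt.pair hfo1 hfo2)
      · exact Or.inr ⟨_, _, _, AMStep.pairR _ hs⟩
    · exact Or.inr ⟨_, _, _, AMStep.pairL _ hs⟩
  | inl hM ihM =>
    intro A ht hg
    have hc := canon ht; simp only [Canon] at hc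
    obtain ⟨hroot, A₁, h1, hch⟩ := hc
    have hsum := (hg.2 []).2.1 hroot
    have hunit : sh A₁ [] = .unit := by
      rw [hch []]; simpa using hsum.1
    have hskip : _ = Tm.skip := unit_canon bitCtx_replicate hM h1 hunit
    subst hskip
    exact Or.inl FOExt.nil
  | inr hM ihM =>
    intro A ht hg
    have hc := canon ht; simp only [Canon] at hc
    obtain ⟨hroot, A₂, h2, hch⟩ := hc
    have hsum := (hg.2 []).2.1 hroot
    have htrue : sh A [true] = .prod := by simpa using hsum.2
    have hprodroot : sh A₂ [] = .prod := by rw [hch []]; exact htrue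
    have hg2 : Good (sh A₂) := good_child_sh hg true hch (by rw [htrue]; simp)
    rcases ihM h2 hg2 with hfo | ⟨N', C', L', hs⟩
    · cases hfo with
      | var hj =>
        have hc2 := canon h2; simp only [Canon] at hc2
        obtain ⟨B, hB, he⟩ := hc2
        have hb := (get_replicate hB).1; subst hb
        have := he []; rw [hprodroot] at this; simp [sh] at this
      | pair f1 f2 => exact Or.inl (FOExt.cons f1 f2)
      | nil =>
        have hc2 := canon h2; simp only [Canon] at hc2
        have := hc2.1; rw [hprodroot] at this; simp at this
      | cons f1 f2 =>
        have hc2 := canon h2; simp only [Canon] at hc2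
        have := hc2.1; rw [hprodroot] at this; simp at this
    · exact Or.inr ⟨_, _, _, AMStep.inrC hs⟩
  | skip =>
    intro A ht hg
    have hc := canon ht; simp only [Canon] at hc
    have := hc []; simp [sh] at this
    exact absurd this.symm hg.1
  | tt =>
    intro A ht hg
    obtain ⟨w, hw⟩ := exists_fresh I cir L
    exact Or.inr ⟨_, _, _, AMStep.ttRed 0 cir L w hw⟩
  | ff =>
    intro A ht hg
    obtain ⟨w, hw⟩ := exists_fresh I cir L
    exact Or.inr ⟨_, _, _, AMStep.ffRed 0 cir L w hw⟩
  | notOp =>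
    intro A ht hg
    have hc := canon ht; simp only [Canon] at hc
    have := hc []; simp [sh] at this
    exact absurd this.symm (hg.2 []).1
  | andOp =>
    intro A ht hg
    have hc := canon ht; simp only [Canon] at hc
    have := hc []; simp [sh] at this
    exact absurd this.symm (hg.2 []).1
  | xorOp =>
    intro A ht hg
    have hc := canon ht; simp only [Canon] at hc
    have := hc []; simp [sh] at this
    exact absurd this.symm (hg.2 []).1
  | split =>
    intro A ht hg
    have hc := canon ht; simp only [Canon] at hc
    exact absurd hc (hg.2 []).1

/-! #### The main progress lemma -/

lemma am_prog (I : Finset ℕ) {Δ : List Ty} {M : Tm} {A : Ty} (ht : HasType Δ M A) :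
    ∀ (L : List ℕ) (cir : List Gate), Δ = List.replicate L.length Ty.bit →
      MValue M ∨ ContainsErr M ∨ ∃ N C' L', AMStep I 0 M cir L N C' L' := by
  classical
  induction ht with
  | var h => exact fun L cir hΔ => Or.inl (MValue.var _)
  | lam h ih => exact fun L cir hΔ => Or.inl (MValue.lam _)
  | app hM hN ihM ihN =>
    intro L cir hΔ
    rcases ihM L cir hΔ with hv | he | ⟨N', C', L', hs⟩
    · subst hΔ
      rcases arrow_canon bitCtx_replicate hv hM with ⟨M₀, rfl⟩ | rfl | ⟨rfl, hbit⟩ |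
          ⟨hop, hprod, hb1, hb2⟩
      · exact Or.inr (Or.inr ⟨_, _, _, AMStep.beta 0 M₀ _ cir L⟩)
      · exact Or.inr (Or.inr ⟨_, _, _, AMStep.splitRed 0 _ cir L⟩)
      · -- notOp
        rcases ihN L cir rfl with hvN | heN | ⟨N', C', L', hs⟩
        · rcases bit_canon hvN hN hbit with rfl | rfl | ⟨n, B, rfl, hB⟩
          · obtain ⟨w, hw⟩ := exists_fresh I cir L
            exact Or.inr (Or.inr ⟨_, _, _, AMStep.appR _ (AMStep.ttRed 0 cir L w hw)⟩)
          · obtain ⟨w, hw⟩ := exists_fresh I cir L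
            exact Or.inr (Or.inr ⟨_, _, _, AMStep.appR _ (AMStep.ffRed 0 cir L w hw)⟩)
          · obtain ⟨-, hn⟩ := get_replicate hB
            obtain ⟨w, hw⟩ := exists_fresh I cir L
            have h := AMStep.notRed (I := I) 0 cir L n w hn hw
            simp only [Nat.zero_add] at h
            exact Or.inr (Or.inr ⟨_, _, _, h⟩)
        · exact Or.inr (Or.inl (ContainsErr.appR heN))
        · exact Or.inr (Or.inr ⟨_, _, _, AMStep.appR _ hs⟩)
      · -- andOp / xorOp
        rcases ihN L cir rfl with hvN | heN | ⟨N', C', L', hs⟩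
        · obtain ⟨N₁, N₂, rfl, hv1, hv2, A₁, A₂, ht1, ht2, hs1, hs2⟩ :=
            prod_canon bitCtx_replicate hvN hN hprod
          have hb1' : sh A₁ [] = .bit := by rw [hs1 []]; exact hb1
          have hb2' : sh A₂ [] = .bit := by rw [hs2 []]; exact hb2
          rcases bit_canon hv1 ht1 hb1' with rfl | rfl | ⟨n₁, B₁, rfl, hB₁⟩
          · obtain ⟨w, hw⟩ := exists_fresh I cir L
            exact Or.inr (Or.inr ⟨_, _, _,
              AMStep.appR _ (AMStep.pairL _ (AMStep.ttRed 0 cir L w hw))⟩)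
          · obtain ⟨w, hw⟩ := exists_fresh I cir L
            exact Or.inr (Or.inr ⟨_, _, _,
              AMStep.appR _ (AMStep.pairL _ (AMStep.ffRed 0 cir L w hw))⟩)
          · rcases bit_canon hv2 ht2 hb2' with rfl | rfl | ⟨n₂, B₂, rfl, hB₂⟩
            · obtain ⟨w, hw⟩ := exists_fresh I cir L
              exact Or.inr (Or.inr ⟨_, _, _,
                AMStep.appR _ (AMStep.pairR _ (AMStep.ttRed 0 cir L w hw))⟩)
            · obtain ⟨w, hw⟩ := exists_fresh I cir L
              exact Or.inr (Or.inr ⟨_, _, _,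
                AMStep.appR _ (AMStep.pairR _ (AMStep.ffRed 0 cir L w hw))⟩)
            · obtain ⟨-, hn₁⟩ := get_replicate hB₁
              obtain ⟨-, hn₂⟩ := get_replicate hB₂
              obtain ⟨w, hw⟩ := exists_fresh I cir L
              rcases hop with rfl | rfl
              · have h := AMStep.andRed (I := I) 0 cir L n₁ n₂ w hn₁ hn₂ hw
                simp only [Nat.zero_add] at h
                exact Or.inr (Or.inr ⟨_, _, _, h⟩)
              · have h := AMStep.xorRed (I := I) 0 cir L n₁ n₂ w hn₁ hn₂ hw
                simp only [Nat.zero_add] at h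
                exact Or.inr (Or.inr ⟨_, _, _, h⟩)
        · exact Or.inr (Or.inl (ContainsErr.appR heN))
        · exact Or.inr (Or.inr ⟨_, _, _, AMStep.appR _ hs⟩)
    · exact Or.inr (Or.inl (ContainsErr.appL he))
    · exact Or.inr (Or.inr ⟨_, _, _, AMStep.appL _ hs⟩)
  | pair h1 h2 ih1 ih2 =>
    intro L cir hΔ
    rcases ih1 L cir hΔ with v1 | e1 | ⟨_, _, _, s1⟩
    · rcases ih2 L cir hΔ with v2 | e2 | ⟨_, _, _, s2⟩
      · exact Or.inl (MValue.pair v1 v2)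
      · exact Or.inr (Or.inl (ContainsErr.pairR e2))
      · exact Or.inr (Or.inr ⟨_, _, _, AMStep.pairR _ s2⟩)
    · exact Or.inr (Or.inl (ContainsErr.pairL e1))
    · exact Or.inr (Or.inr ⟨_, _, _, AMStep.pairL _ s1⟩)
  | fst h ih =>
    intro L cir hΔ
    rcases ih L cir hΔ with hv | he | ⟨_, _, _, hs⟩
    · subst hΔ
      obtain ⟨M₁, M₂, rfl, -, -, -⟩ :=
        prod_canon bitCtx_replicate hv h (by simp [sh])
      exact Or.inr (Or.inr ⟨_, _, _, AMStep.fstPair 0 M₁ M₂ cir L⟩)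
    · exact Or.inr (Or.inl (ContainsErr.fst he))
    · exact Or.inr (Or.inr ⟨_, _, _, AMStep.fstC hs⟩)
  | snd h ih =>
    intro L cir hΔ
    rcases ih L cir hΔ with hv | he | ⟨_, _, _, hs⟩
    · subst hΔ
      obtain ⟨M₁, M₂, rfl, -, -, -⟩ :=
        prod_canon bitCtx_replicate hv h (by simp [sh])
      exact Or.inr (Or.inr ⟨_, _, _, AMStep.sndPair 0 M₁ M₂ cir L⟩)
    · exact Or.inr (Or.inl (ContainsErr.snd he))
    · exact Or.inr (Or.inr ⟨_, _, _, AMStep.sndC hs⟩)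
  | skip => exact fun L cir hΔ => Or.inl MValue.skip
  | letUnit h1 h2 ih1 ih2 =>
    intro L cir hΔ
    rcases ih1 L cir hΔ with hv | he | ⟨_, _, _, hs⟩
    · subst hΔ
      have hskip := unit_canon bitCtx_replicate hv h1 (by simp [sh])
      subst hskip
      exact Or.inr (Or.inr ⟨_, _, _, AMStep.letU 0 _ cir L⟩)
    · exact Or.inr (Or.inl (ContainsErr.letL he))
    · exact Or.inr (Or.inr ⟨_, _, _, AMStep.letL _ hs⟩)
  | tt => exact fun L cir hΔ => Or.inl MValue.tt
  | ff => exact fun L cir hΔ => Or.inl MValue.ff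
  | @ite Δ' P V W Cty hP hV hW hFO ihP ihV ihW =>
    intro L cir hΔ
    subst hΔ
    rcases ihP L cir rfl with vP | eP | ⟨_, _, _, sP⟩
    · rcases bit_canon vP hP (by simp [sh]) with rfl | rfl | ⟨n, B, rfl, hB⟩
      · obtain ⟨w, hw⟩ := exists_fresh I cir L
        exact Or.inr (Or.inr ⟨_, _, _, AMStep.ite1 _ _ (AMStep.ttRed 0 cir L w hw)⟩)
      · obtain ⟨w, hw⟩ := exists_fresh I cir L
        exact Or.inr (Or.inr ⟨_, _, _, AMStep.ite1 _ _ (AMStep.ffRed 0 cir L w hw)⟩)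
      · obtain ⟨-, hn⟩ := get_replicate hB
        rcases ihV L cir rfl with vV | eV | ⟨_, _, _, sV⟩
        · rcases ihW L cir rfl with vW | eW | ⟨_, _, _, sW⟩
          · rcases fo_val I cir L vV hV (fo_good hFO) with fV | ⟨_, _, _, sV⟩
            · rcases fo_val I cir L vW hW (fo_good hFO) with fW | ⟨_, _, _, sW⟩
              · by_cases hIte : ∃ U nn ps, IteAux 0 L L.length V W U nn ps
                · obtain ⟨U, nn, ps, hI⟩ := hIte
                  obtain ⟨ws, hlen, hnd, hfr⟩ := exists_fresh_list I cir L ps.length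
                  have h := AMStep.iteRed (I := I) 0 cir L n V W U nn ps ws hn hI
                    hlen hnd hfr
                  simp only [Nat.zero_add] at h
                  exact Or.inr (Or.inr ⟨_, _, _, h⟩)
                · have h := AMStep.iteErr (I := I) 0 cir L n V W hn fV fW hIte
                  simp only [Nat.zero_add] at h
                  exact Or.inr (Or.inr ⟨_, _, _, h⟩)
              · exact Or.inr (Or.inr ⟨_, _, _, AMStep.ite3 _ _ sW⟩)
            · exact Or.inr (Or.inr ⟨_, _, _, AMStep.ite2 _ _ sV⟩)
          · exact Or.inr (Or.inl (ContainsErr.ite3 eW))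
          · exact Or.inr (Or.inr ⟨_, _, _, AMStep.ite3 _ _ sW⟩)
        · exact Or.inr (Or.inl (ContainsErr.ite2 eV))
        · exact Or.inr (Or.inr ⟨_, _, _, AMStep.ite2 _ _ sV⟩)
    · exact Or.inr (Or.inl (ContainsErr.ite1 eP))
    · exact Or.inr (Or.inr ⟨_, _, _, AMStep.ite1 _ _ sP⟩)
  | notOp => exact fun L cir hΔ => Or.inl MValue.notOp
  | andOp => exact fun L cir hΔ => Or.inl MValue.andOp
  | xorOp => exact fun L cir hΔ => Or.inl MValue.xorOp
  | inl h ih =>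
    intro L cir hΔ
    rcases ih L cir hΔ with hv | he | ⟨_, _, _, hs⟩
    · exact Or.inl (MValue.inl hv)
    · exact Or.inr (Or.inl (ContainsErr.inl he))
    · exact Or.inr (Or.inr ⟨_, _, _, AMStep.inlC hs⟩)
  | inr h ih =>
    intro L cir hΔ
    rcases ih L cir hΔ with hv | he | ⟨_, _, _, hs⟩
    · exact Or.inl (MValue.inr hv)
    · exact Or.inr (Or.inl (ContainsErr.inr he))
    · exact Or.inr (Or.inr ⟨_, _, _, AMStep.inrC hs⟩)
  | matchSum hP hM hN ihP ihM ihN =>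
    intro L cir hΔ
    rcases ihP L cir hΔ with hv | he | ⟨_, _, _, hs⟩
    · subst hΔ
      rcases sum_canon bitCtx_replicate hv hP (by simp [sh]) with
        ⟨P', rfl, -, -⟩ | ⟨P', rfl, -, -⟩
      · exact Or.inr (Or.inr ⟨_, _, _, AMStep.matchInl 0 P' _ _ cir L⟩)
      · exact Or.inr (Or.inr ⟨_, _, _, AMStep.matchInr 0 P' _ _ cir L⟩)
    · exact Or.inr (Or.inl (ContainsErr.match1 he))
    · exact Or.inr (Or.inr ⟨_, _, _, AMStep.match1 _ _ hs⟩)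
  | split => exact fun L cir hΔ => Or.inl MValue.split
  | fix h ih =>
    exact fun L cir hΔ => Or.inr (Or.inr ⟨_, _, _, AMStep.fixRed 0 _ cir L⟩)
  | err => exact fun L cir hΔ => Or.inr (Or.inl ContainsErr.err)
  | conv h e ih => exact ih

end ProgressAux

/-- progress for the circuit-generating abstract machine. -/
theorem am_progress (I : Finset ℕ) (M : Tm) (C : List Gate) (L : List ℕ)
    (m : ℕ) (hL : L.Nodup)
    (ht : HasType (List.replicate L.length Ty.bit) M (bitPow m)) :
    MValue M ∨ ContainsErr M ∨ ∃ N C' L', AMStep I 0 M C L N C' L' := by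
  exact am_prog I ht L C rfl
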